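/- Fix an integer p ≥ 2. In the free ℤ-module with basis h, e_0, e_1, …, e_{2p+2}, equipped with the symmetric bilinear form Q determined by Q(h,h) = 1, Q(e_i,e_i) = −1 and all other pairings of distinct basis vectors equal to 0, let S be the set of vectors: h; h − e_0 − e_1; e_i − e_{i+1} for i ∈ {1,…,2p−3} ∪ {2p, 2p+1}; e_{2p−2} − e_{2p−1} − e_{2p}; and e_0 − e_1 − ⋯ − e_{p−1}. Then the orthogonal complement of S with respect to Q is exactly the ℤ-span of the single vector e_{2p−1} − e_{2p} − e_{2p+1} − e_{2p+2} (which has square −4). -/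
import Mathlib


/-- The free ℤ-module with basis h, e_0, …, e_{n-1}. -/
abbrev BlowupLat (n : ℕ) : Type := ℤ × (Fin n → ℤ)

/-- The intersection form: Q(h,h) = 1, Q(e_i,e_i) = −1, and all other pairings of distinct
basis vectors vanish. -/
def Qlat {n : ℕ} (v w : BlowupLat n) : ℤ := v.1 * w.1 - ∑ i, v.2 i * w.2 i

/-- The basis vector h. -/
def hLat {n : ℕ} : BlowupLat n := (1, 0)

/-- The basis vector e_i. -/
def eLat {n : ℕ} (i : ℕ) : BlowupLat n := (0, fun j => if (j : ℕ) = i then 1 else 0)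

namespace Stmt18Aux

variable {n : ℕ}

/-- Extended coordinate function. -/
def gc (x : BlowupLat n) (i : ℕ) : ℤ := ∑ j : Fin n, if (j : ℕ) = i then x.2 j else 0

lemma Qlat_comm (x y : BlowupLat n) : Qlat x y = Qlat y x := by
  simp [Qlat, mul_comm]

lemma Qlat_add_right (x a b : BlowupLat n) : Qlat x (a + b) = Qlat x a + Qlat x b := by
  simp only [Qlat, Prod.fst_add, Prod.snd_add, Pi.add_apply, mul_add,
    Finset.sum_add_distrib]
  ring

lemma Qlat_smul_right (x : BlowupLat n) (c : ℤ) (a : BlowupLat n) :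
    Qlat x (c • a) = c * Qlat x a := by
  simp only [Qlat, Prod.smul_fst, Prod.smul_snd, Pi.smul_apply, smul_eq_mul]
  rw [Finset.sum_congr rfl (fun i _ => by ring :
    ∀ i ∈ Finset.univ, x.2 i * (c * a.2 i) = c * (x.2 i * a.2 i)), ← Finset.mul_sum]
  ring

/-- `Qlat x ·` as a linear map. -/
def QR (x : BlowupLat n) : BlowupLat n →ₗ[ℤ] ℤ where
  toFun w := Qlat x w
  map_add' := Qlat_add_right x
  map_smul' c a := Qlat_smul_right x c a

lemma Qlat_sub_right (x a b : BlowupLat n) : Qlat x (a - b) = Qlat x a - Qlat x b :=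
  (QR x).map_sub a b

lemma Qlat_sum_right (x : BlowupLat n) (s : Finset ℕ) (g : ℕ → BlowupLat n) :
    Qlat x (∑ j ∈ s, g j) = ∑ j ∈ s, Qlat x (g j) :=
  map_sum (QR x) g s

lemma Qlat_smul_left (c : ℤ) (x y : BlowupLat n) : Qlat (c • x) y = c * Qlat x y := by
  rw [Qlat_comm, Qlat_smul_right, Qlat_comm]

lemma Q_hLat (x : BlowupLat n) : Qlat x hLat = x.1 := by
  simp [Qlat, hLat]

lemma Q_eLat (x : BlowupLat n) (i : ℕ) : Qlat x (eLat i) = - gc x i := by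
  simp only [Qlat, eLat, gc, mul_ite, mul_one, mul_zero, zero_sub, neg_inj]

lemma gc_lt (x : BlowupLat n) (i : ℕ) (h : i < n) : gc x i = x.2 ⟨i, h⟩ := by
  rw [gc]
  rw [show (fun j : Fin n => if (j : ℕ) = i then x.2 j else 0) =
      (fun j : Fin n => if j = (⟨i, h⟩ : Fin n) then x.2 j else 0) from funext fun j => by
    by_cases hj : (j : ℕ) = i <;> simp [hj, Fin.ext_iff]]
  simp

lemma gc_ge (x : BlowupLat n) (i : ℕ) (h : n ≤ i) : gc x i = 0 :=
  Finset.sum_eq_zero fun j _ => if_neg (by have := j.2; omega)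

lemma gc_smul (c : ℤ) (x : BlowupLat n) (i : ℕ) : gc (c • x) i = c * gc x i := by
  simp only [gc, Prod.smul_snd, Pi.smul_apply, smul_eq_mul, Finset.mul_sum]
  exact Finset.sum_congr rfl fun j _ => by by_cases hj : (j : ℕ) = i <;> simp [hj]

lemma Q_hee (x : BlowupLat n) (i j : ℕ) :
    Qlat x (hLat - eLat i - eLat j) = x.1 + gc x i + gc x j := by
  rw [Qlat_sub_right, Qlat_sub_right, Q_hLat, Q_eLat, Q_eLat]; ring

lemma Q_ee (x : BlowupLat n) (i j : ℕ) :
    Qlat x (eLat i - eLat j) = - gc x i + gc x j := by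
  rw [Qlat_sub_right, Q_eLat, Q_eLat]; ring

lemma Q_eee (x : BlowupLat n) (i j k : ℕ) :
    Qlat x (eLat i - eLat j - eLat k) = - gc x i + gc x j + gc x k := by
  rw [Qlat_sub_right, Qlat_sub_right, Q_eLat, Q_eLat, Q_eLat]; ring

lemma Q_eeee (x : BlowupLat n) (i j k l : ℕ) :
    Qlat x (eLat i - eLat j - eLat k - eLat l) = - gc x i + gc x j + gc x k + gc x l := by
  rw [Qlat_sub_right, Qlat_sub_right, Qlat_sub_right, Q_eLat, Q_eLat, Q_eLat, Q_eLat]; ring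

lemma Q_esum (x : BlowupLat n) (i : ℕ) (s : Finset ℕ) :
    Qlat x (eLat i - ∑ j ∈ s, eLat j) = - gc x i + ∑ j ∈ s, gc x j := by
  rw [Qlat_sub_right, Q_eLat, Qlat_sum_right]
  rw [Finset.sum_congr rfl fun j _ => Q_eLat x j, Finset.sum_neg_distrib]
  ring

end Stmt18Aux

open Stmt18Aux

theorem stmt_18 (p : ℕ) (hp : 2 ≤ p)
    (S : Set (BlowupLat (2 * p + 3)))
    (hS : S = {hLat} ∪ {hLat - eLat 0 - eLat 1} ∪
        ((fun i : ℕ => eLat i - eLat (i + 1)) ''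
          (Set.Icc 1 (2 * p - 3) ∪ {2 * p, 2 * p + 1})) ∪
        {eLat (2 * p - 2) - eLat (2 * p - 1) - eLat (2 * p)} ∪
        {eLat 0 - ∑ j ∈ Finset.Icc 1 (p - 1), eLat j})
    (v : BlowupLat (2 * p + 3))
    (hv : v = eLat (2 * p - 1) - eLat (2 * p) - eLat (2 * p + 1) - eLat (2 * p + 2)) :
    {x : BlowupLat (2 * p + 3) | ∀ s ∈ S, Qlat x s = 0} =
      (Submodule.span ℤ ({v} : Set (BlowupLat (2 * p + 3))) : Set (BlowupLat (2 * p + 3))) ∧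
    Qlat v v = -4 := by
  -- coordinates of v
  have hgv : ∀ i : ℕ, gc v i =
      (if i = 2 * p - 1 then 1 else 0) - (if i = 2 * p then 1 else 0)
        - (if i = 2 * p + 1 then 1 else 0) - (if i = 2 * p + 2 then 1 else 0) := by
    intro i
    by_cases hi : i < 2 * p + 3
    · rw [gc_lt v i hi, hv]
      simp only [eLat, Prod.snd_sub, Pi.sub_apply]
    · rw [gc_ge v i (by omega)]
      rw [if_neg (by omega), if_neg (by omega), if_neg (by omega), if_neg (by omega)]
      ring
  have hQvv : Qlat v v = -4 := by
    rw [show Qlat v v = Qlat v (eLat (2*p-1) - eLat (2*p) - eLat (2*p+1) - eLat (2*p+2)) from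
      by rw [← hv], Q_eeee]
    rw [hgv, hgv, hgv, hgv]
    rw [if_pos rfl, if_pos rfl, if_pos rfl, if_pos rfl,
      if_neg (by omega), if_neg (by omega), if_neg (by omega), if_neg (by omega),
      if_neg (by omega), if_neg (by omega), if_neg (by omega), if_neg (by omega),
      if_neg (by omega), if_neg (by omega), if_neg (by omega), if_neg (by omega)]
    ring
  refine ⟨?_, hQvv⟩
  ext x
  simp only [Set.mem_setOf_eq, SetLike.mem_coe, Submodule.mem_span_singleton]
  constructor
  · -- forward
    intro hx
    set f : ℕ → ℤ := gc x with hf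
    have h1 : x.1 = 0 := by
      have := hx hLat (by rw [hS]; exact Or.inl (Or.inl (Or.inl (Or.inl rfl))))
      rwa [Q_hLat] at this
    have h2 : x.1 + f 0 + f 1 = 0 := by
      have := hx (hLat - eLat 0 - eLat 1)
        (by rw [hS]; exact Or.inl (Or.inl (Or.inl (Or.inr rfl))))
      rwa [Q_hee] at this
    have hchain : ∀ i : ℕ, (1 ≤ i ∧ i ≤ 2 * p - 3) ∨ i = 2 * p ∨ i = 2 * p + 1 →
        f i = f (i + 1) := by
      intro i hi
      have hmem : i ∈ Set.Icc 1 (2 * p - 3) ∪ {2 * p, 2 * p + 1} := by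
        rcases hi with h | h | h
        · exact Or.inl h
        · exact Or.inr (Or.inl h)
        · exact Or.inr (Or.inr h)
      have := hx (eLat i - eLat (i + 1))
        (by rw [hS]; exact Or.inl (Or.inl (Or.inr ⟨i, hmem, rfl⟩)))
      rw [Q_ee] at this
      linarith
    have h4 : - f (2 * p - 2) + f (2 * p - 1) + f (2 * p) = 0 := by
      have := hx (eLat (2 * p - 2) - eLat (2 * p - 1) - eLat (2 * p))
        (by rw [hS]; exact Or.inl (Or.inr rfl))
      rwa [Q_eee] at this
    have h5 : - f 0 + ∑ j ∈ Finset.Icc 1 (p - 1), f j = 0 := by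
      have := hx (eLat 0 - ∑ j ∈ Finset.Icc 1 (p - 1), eLat j)
        (by rw [hS]; exact Or.inr rfl)
      rwa [Q_esum] at this
    -- chain equalities
    have hch : ∀ j : ℕ, j ≤ 2 * p - 2 → 1 ≤ j → f j = f 1 := by
      intro j
      induction j with
      | zero => omega
      | succ k ih =>
        intro h2p h1k
        rcases Nat.eq_zero_or_pos k with hk | hk
        · subst hk; rfl
        · rw [← hchain k (Or.inl ⟨hk, by omega⟩)]
          exact ih (by omega) hk
    -- f 1 = 0
    have hsum : ∑ j ∈ Finset.Icc 1 (p - 1), f j = ((p - 1 : ℕ) : ℤ) * f 1 := by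
      have hcg : ∑ j ∈ Finset.Icc 1 (p - 1), f j = ∑ _j ∈ Finset.Icc 1 (p - 1), f 1 :=
        Finset.sum_congr rfl fun j hj => by
          have hj' := Finset.mem_Icc.mp hj
          exact hch j (by omega) hj'.1
      rw [hcg, Finset.sum_const, Nat.card_Icc, nsmul_eq_mul]
      norm_num
    have hf1 : f 1 = 0 := by
      rw [hsum] at h5
      have hc : ((p - 1 : ℕ) : ℤ) = (p : ℤ) - 1 := by
        have : (1 : ℕ) ≤ p := by omega
        push_cast [this]; ring
      rw [hc] at h5
      have hp0 : (p : ℤ) ≠ 0 := by exact_mod_cast (by omega : p ≠ 0)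
      have : (p : ℤ) * f 1 = 0 := by linarith
      exact (mul_eq_zero.mp this).resolve_left hp0
    have hf0 : f 0 = 0 := by linarith
    have hmid : ∀ j : ℕ, 1 ≤ j → j ≤ 2 * p - 2 → f j = 0 := fun j h1j h2j => by
      rw [hch j h2j h1j]; exact hf1
    have h2p2 : f (2 * p - 2) = 0 := hmid _ (by omega) (by omega)
    have hfp : f (2 * p) = - f (2 * p - 1) := by linarith
    have hfp1 : f (2 * p + 1) = - f (2 * p - 1) := by
      rw [← hchain (2 * p) (Or.inr (Or.inl rfl))]; exact hfp
    have hfp2 : f (2 * p + 2) = - f (2 * p - 1) := by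
      rw [← hchain (2 * p + 1) (Or.inr (Or.inr rfl))]; exact hfp1
    refine ⟨f (2 * p - 1), ?_⟩
    have hx2 : ∀ j : Fin (2 * p + 3), x.2 j = f (j : ℕ) := fun j => by
      rw [hf, gc_lt x (j : ℕ) j.2]
    apply Prod.ext
    · rw [h1]
      have : v.1 = 0 := by rw [hv]; rfl
      simp [this]
    · funext j
      have hvj : v.2 j = (if (j : ℕ) = 2 * p - 1 then 1 else 0)
          - (if (j : ℕ) = 2 * p then 1 else 0) - (if (j : ℕ) = 2 * p + 1 then 1 else 0)
          - (if (j : ℕ) = 2 * p + 2 then 1 else 0) := by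
        rw [← gc_lt v (j : ℕ) j.2, hgv]
      have hsm : (f (2 * p - 1) • v).2 j = f (2 * p - 1) * v.2 j := rfl
      rw [hsm, hvj, hx2 j]
      have hj3 : (j : ℕ) < 2 * p + 3 := j.2
      rcases (by omega : (j : ℕ) = 0 ∨ (1 ≤ (j : ℕ) ∧ (j : ℕ) ≤ 2 * p - 2) ∨
          (j : ℕ) = 2 * p - 1 ∨ (j : ℕ) = 2 * p ∨ (j : ℕ) = 2 * p + 1 ∨
          (j : ℕ) = 2 * p + 2) with hc | hc | hc | hc | hc | hc
      · rw [if_neg (by omega), if_neg (by omega), if_neg (by omega), if_neg (by omega),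
          hc, hf0]; ring
      · rw [if_neg (by omega), if_neg (by omega), if_neg (by omega), if_neg (by omega),
          hmid _ hc.1 hc.2]; ring
      · rw [if_pos hc, if_neg (by omega), if_neg (by omega), if_neg (by omega), hc]; ring
      · rw [if_neg (by omega), if_pos hc, if_neg (by omega), if_neg (by omega), hc, hfp]
        ring
      · rw [if_neg (by omega), if_neg (by omega), if_pos hc, if_neg (by omega), hc, hfp1]
        ring
      · rw [if_neg (by omega), if_neg (by omega), if_neg (by omega), if_pos hc, hc, hfp2]
        ring
  · -- reverse
    rintro ⟨c, rfl⟩ s hs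
    rw [Qlat_smul_left]
    have hv1 : v.1 = 0 := by rw [hv]; rfl
    have hQvs : Qlat v s = 0 := by
      rw [hS] at hs
      rcases hs with ((((hs | hs) | hs) | hs) | hs)
      · rw [hs, Q_hLat, hv1]
      · rw [hs, Q_hee, hgv, hgv, hv1]
        rw [if_neg (by omega), if_neg (by omega), if_neg (by omega), if_neg (by omega),
          if_neg (by omega), if_neg (by omega), if_neg (by omega), if_neg (by omega)]
        ring
      · obtain ⟨i, hi, rfl⟩ := hs
        rw [Q_ee, hgv, hgv]
        have hi' : i = 2 * p ∨ i = 2 * p + 1 ∨ (1 ≤ i ∧ i ≤ 2 * p - 3) := by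
          simpa [Set.mem_Icc] using hi
        rcases hi' with hi2 | hi2 | hi2
        · subst hi2
          rw [if_neg (by omega), if_pos rfl, if_neg (by omega), if_neg (by omega),
            if_neg (by omega), if_neg (by omega), if_pos rfl, if_neg (by omega)]
          ring
        · subst hi2
          rw [if_neg (by omega), if_neg (by omega), if_pos rfl, if_neg (by omega),
            if_neg (by omega), if_neg (by omega), if_neg (by omega), if_pos rfl]
          ring
        · obtain ⟨hia, hib⟩ := hi2
          rw [if_neg (by omega), if_neg (by omega), if_neg (by omega), if_neg (by omega),
            if_neg (by omega), if_neg (by omega), if_neg (by omega), if_neg (by omega)]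
          ring
      · rw [hs, Q_eee, hgv, hgv, hgv]
        rw [if_neg (by omega), if_neg (by omega), if_neg (by omega), if_neg (by omega),
          if_pos rfl, if_neg (by omega), if_neg (by omega), if_neg (by omega),
          if_neg (by omega), if_pos rfl, if_neg (by omega), if_neg (by omega)]
        ring
      · rw [hs, Q_esum]
        rw [Finset.sum_eq_zero fun j hj => by
          rw [Finset.mem_Icc] at hj
          rw [hgv, if_neg (by omega), if_neg (by omega), if_neg (by omega),
            if_neg (by omega)]
          ring]
        rw [hgv]
        rw [if_neg (by omega), if_neg (by omega), if_neg (by omega), if_neg (by omega)]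
        ring
    rw [hQvs]; ring
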